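/- (Characterization of abnormal extremals.) Let A and B be matrices in su(1,1) that are linearly independent over ℝ, and suppose there exists u₀ ∈ ℝ such that the real part of 2·Tr((A + u₀·B)²) is negative (the controllability condition). Let u : ℝ → ℝ be continuous, and let X : ℝ → M₂(ℂ) be differentiable with X(t) invertible for every t and X′(t) = (A + u(t)·B)·X(t) for all t. Suppose T ∈ su(1,1), T ≠ 0, and Tr(T · X(t)⁻¹ · B · X(t)) = 0 for all t. Then Tr(B·B) ≠ 0 and for every t, (u(t) : ℂ)·Tr(B·B) = −Tr(A·B); in particular u is the constant function u(t) = −Tr(A·B)/Tr(B·B). -/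

import Mathlib

open Matrix

/-- The metric matrix η = diag(1, -1). -/
def eta : Matrix (Fin 2) (Fin 2) ℂ := !![1, 0; 0, -1]

/-- Membership in the Lie algebra su(1,1): trace zero and Mᴴη + ηM = 0. -/
def su11 (M : Matrix (Fin 2) (Fin 2) ℂ) : Prop :=
  M.trace = 0 ∧ Mᴴ * eta + eta * M = 0

section Aux

abbrev Mat2 := Matrix (Fin 2) (Fin 2) ℂ

private lemma tr4_expand (P M Y Z : Mat2) :
    (P * Y * M * Z).trace = ∑ i : Fin 2, ∑ j : Fin 2, ∑ k : Fin 2, ∑ l : Fin 2,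
      P i j * Y j k * (M k l * Z l i) := by
  simp [Matrix.trace_fin_two, Matrix.mul_apply, Fin.sum_univ_two]
  ring

private lemma tr4_deriv (P M : Mat2) (f g : ℝ → Mat2) (f' g' : Mat2) (t : ℝ)
    (hf : ∀ i j, HasDerivAt (fun s => f s i j) (f' i j) t)
    (hg : ∀ i j, HasDerivAt (fun s => g s i j) (g' i j) t) :
    HasDerivAt (fun s => (P * f s * M * g s).trace)
      ((P * f' * M * g t).trace + (P * f t * M * g').trace) t := by
  have key : ∀ (i j k l : Fin 2),
      HasDerivAt (fun s => P i j * f s j k * (M k l * g s l i))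
        (P i j * f' j k * (M k l * g t l i) + P i j * f t j k * (M k l * g' l i)) t := by
    intro i j k l
    exact ((hf j k).const_mul (P i j)).mul ((hg l i).const_mul (M k l))
  have tot : HasDerivAt
      (fun s => ∑ i : Fin 2, ∑ j : Fin 2, ∑ k : Fin 2, ∑ l : Fin 2,
        P i j * f s j k * (M k l * g s l i))
      (∑ i : Fin 2, ∑ j : Fin 2, ∑ k : Fin 2, ∑ l : Fin 2,
        (P i j * f' j k * (M k l * g t l i) + P i j * f t j k * (M k l * g' l i))) t :=
    HasDerivAt.fun_sum (fun i _ => HasDerivAt.fun_sum (fun j _ => HasDerivAt.fun_sum (fun k _ =>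
      HasDerivAt.fun_sum (fun l _ => key i j k l))))
  simp only [tr4_expand]
  simpa only [Finset.sum_add_distrib] using tot

private lemma adj_eq_neg (M : Mat2) (h : M 1 1 = -M 0 0) : M.adjugate = -M := by
  rw [Matrix.adjugate_fin_two]
  ext i j
  fin_cases i <;> fin_cases j <;>
    simp [Fin.mk_zero, Fin.mk_one, h]

private lemma lie_id1 (A B : Mat2) (hA : A 1 1 = -A 0 0) (hB : B 1 1 = -B 0 0) :
    (B*A - A*B) * A - A * (B*A - A*B)
      = (2*(A*A).trace) • B - (2*(A*B).trace) • A := by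
  ext i j
  fin_cases i <;> fin_cases j <;>
    simp only [Fin.mk_zero, Fin.mk_one, Matrix.sub_apply, Matrix.smul_apply, Matrix.mul_apply,
      Fin.sum_univ_two, Matrix.trace_fin_two, hA, hB, smul_eq_mul] <;> ring

private lemma lie_id2 (A B : Mat2) (hA : A 1 1 = -A 0 0) (hB : B 1 1 = -B 0 0) :
    (B*A - A*B) * B - B * (B*A - A*B)
      = (2*(A*B).trace) • B - (2*(B*B).trace) • A := by
  ext i j
  fin_cases i <;> fin_cases j <;>
    simp only [Fin.mk_zero, Fin.mk_one, Matrix.sub_apply, Matrix.smul_apply, Matrix.mul_apply,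
      Fin.sum_univ_two, Matrix.trace_fin_two, hA, hB, smul_eq_mul] <;> ring

private lemma revCS (v0 v1 v2 w0 w1 w2 : ℝ) (hperp : w1*v1 + w2*v2 = w0*v0)
    (hv : v1^2 + v2^2 < v0^2) (hW : ¬(w1 = 0 ∧ w2 = 0)) : w0^2 < w1^2 + w2^2 := by
  have hv0sq : 0 < v0^2 := by nlinarith [sq_nonneg v1, sq_nonneg v2]
  have hWpos : 0 < w1^2 + w2^2 := by
    rcases not_and_or.1 hW with h | h
    · have := pow_two_pos_of_ne_zero h; nlinarith [sq_nonneg w2]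
    · have := pow_two_pos_of_ne_zero h; nlinarith [sq_nonneg w1]
  have hCS : (w1*v1 + w2*v2)^2 ≤ (w1^2+w2^2) * (v1^2+v2^2) := by
    nlinarith [sq_nonneg (w1*v2 - w2*v1)]
  have h1 : w0^2 * v0^2 < (w1^2+w2^2) * v0^2 := by
    calc w0^2 * v0^2 = (w1*v1+w2*v2)^2 := by rw [hperp]; ring
    _ ≤ (w1^2+w2^2) * (v1^2+v2^2) := hCS
    _ < (w1^2+w2^2) * v0^2 := by exact mul_lt_mul_of_pos_left hv hWpos
  exact lt_of_mul_lt_mul_right h1 (le_of_lt hv0sq)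

private lemma gram_neg (a b p1 p2 q1 q2 u₀ : ℝ)
    (hc : (p1+u₀*q1)^2 + (p2+u₀*q2)^2 < (a+u₀*b)^2)
    (hind : ∀ x y : ℝ, x*a + y*b = 0 → x*p1 + y*q1 = 0 → x*p2 + y*q2 = 0 → x = 0 ∧ y = 0) :
    (p1^2+p2^2-a^2) * (q1^2+q2^2-b^2) < (p1*q1+p2*q2-a*b)^2 := by
  obtain ⟨v0, hv0d⟩ : ∃ x, x = a+u₀*b := ⟨_, rfl⟩
  obtain ⟨v1, hv1d⟩ : ∃ x, x = p1+u₀*q1 := ⟨_, rfl⟩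
  obtain ⟨v2, hv2d⟩ : ∃ x, x = p2+u₀*q2 := ⟨_, rfl⟩
  have hgvv0 : v1^2 + v2^2 < v0^2 := by rw [hv0d, hv1d, hv2d]; linarith
  obtain ⟨gvv, hgvvd⟩ : ∃ x, x = v1^2 + v2^2 - v0^2 := ⟨_, rfl⟩
  obtain ⟨gvb, hgvbd⟩ : ∃ x, x = v1*q1 + v2*q2 - v0*b := ⟨_, rfl⟩
  obtain ⟨gbb, hgbbd⟩ : ∃ x, x = q1^2 + q2^2 - b^2 := ⟨_, rfl⟩
  have hgvv : gvv < 0 := by rw [hgvvd]; linarith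
  have hv0 : v0 ≠ 0 := by
    intro h; rw [h] at hgvv0; nlinarith [sq_nonneg v1, sq_nonneg v2]
  have hkey : gvv * gbb - gvb^2 < 0 := by
    obtain ⟨w0, hw0d⟩ : ∃ x, x = gvv*b - gvb*v0 := ⟨_, rfl⟩
    obtain ⟨w1, hw1d⟩ : ∃ x, x = gvv*q1 - gvb*v1 := ⟨_, rfl⟩
    obtain ⟨w2, hw2d⟩ : ∃ x, x = gvv*q2 - gvb*v2 := ⟨_, rfl⟩
    have hw : w1^2 + w2^2 - w0^2 = gvv * (gvv*gbb - gvb^2) := by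
      rw [hw0d, hw1d, hw2d, hgvvd, hgvbd, hgbbd]; ring
    have hperp : w1*v1 + w2*v2 = w0*v0 := by
      rw [hw0d, hw1d, hw2d, hgvvd, hgvbd]; ring
    by_cases hW : w1 = 0 ∧ w2 = 0
    · exfalso
      obtain ⟨h1, h2⟩ := hW
      have h0 : w0 = 0 := by
        have : w0 * v0 = 0 := by rw [← hperp, h1, h2]; ring
        exact (mul_eq_zero.1 this).resolve_right hv0
      have e1 : gvb * a + (gvb*u₀ - gvv) * b = 0 := by
        have h := h0; rw [hw0d, hv0d] at h; linarith [h]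
      have e2 : gvb * p1 + (gvb*u₀ - gvv) * q1 = 0 := by
        have h := h1; rw [hw1d, hv1d] at h; linarith [h]
      have e3 : gvb * p2 + (gvb*u₀ - gvv) * q2 = 0 := by
        have h := h2; rw [hw2d, hv2d] at h; linarith [h]
      obtain ⟨hx, hy⟩ := hind _ _ e1 e2 e3
      have : gvv = 0 := by rw [hx] at hy; linarith
      linarith
    · have h2 := revCS v0 v1 v2 w0 w1 w2 hperp hgvv0 hW
      have h3 : 0 < gvv * (gvv*gbb - gvb^2) := by rw [← hw]; linarith
      nlinarith [h3]
  have hident : (p1^2+p2^2-a^2) * (q1^2+q2^2-b^2) - (p1*q1+p2*q2-a*b)^2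
      = gvv * gbb - gvb^2 := by
    rw [hgvvd, hgvbd, hgbbd, hv0d, hv1d, hv2d]; ring
  linarith [hkey, hident]

private lemma su11_coords (M : Mat2) (hM : su11 M) :
    ∃ (m r s : ℝ), M 0 0 = (m:ℂ) * Complex.I ∧ M 0 1 = (r:ℂ) + (s:ℂ) * Complex.I ∧
      M 1 0 = (r:ℂ) - (s:ℂ) * Complex.I ∧ M 1 1 = -((m:ℂ) * Complex.I) := by
  obtain ⟨h1, h2⟩ := hM
  rw [Matrix.trace_fin_two] at h1
  have e00 : (Mᴴ * eta + eta * M) 0 0 = 0 := by rw [h2]; rfl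
  have e10 : (Mᴴ * eta + eta * M) 1 0 = 0 := by rw [h2]; rfl
  simp [Matrix.add_apply, Matrix.mul_apply, Fin.sum_univ_two, Matrix.conjTranspose_apply,
    eta, Matrix.vecMul, dotProduct] at e00 e10
  have hre : (M 0 0).re = 0 := by
    have := congrArg Complex.re e00
    simp [Complex.add_re, Complex.conj_re] at this
    linarith [this]
  refine ⟨(M 0 0).im, (M 0 1).re, (M 0 1).im, ?_, ?_, ?_, ?_⟩
  · apply Complex.ext <;> simp [hre]
  · exact (Complex.re_add_im (M 0 1)).symm
  · have h10 : M 1 0 = (starRingEnd ℂ) (M 0 1) := by linear_combination -e10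
    rw [h10]; apply Complex.ext <;> simp
  · have h11 : M 1 1 = -(M 0 0) := by linear_combination h1
    rw [h11]; congr 1
    apply Complex.ext <;> simp [hre]

private lemma tr_mul_eq (A B : Mat2) (a p1 p2 b q1 q2 : ℝ)
    (hA00 : A 0 0 = (a:ℂ) * Complex.I) (hA01 : A 0 1 = (p1:ℂ) + (p2:ℂ) * Complex.I)
    (hA10 : A 1 0 = (p1:ℂ) - (p2:ℂ) * Complex.I) (hA11 : A 1 1 = -((a:ℂ) * Complex.I))
    (hB00 : B 0 0 = (b:ℂ) * Complex.I) (hB01 : B 0 1 = (q1:ℂ) + (q2:ℂ) * Complex.I)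
    (hB10 : B 1 0 = (q1:ℂ) - (q2:ℂ) * Complex.I) (hB11 : B 1 1 = -((b:ℂ) * Complex.I)) :
    (A * B).trace = ((2*(p1*q1+p2*q2-a*b) : ℝ) : ℂ) := by
  rw [Matrix.trace_fin_two]
  simp only [Matrix.mul_apply, Fin.sum_univ_two, hA00, hA01, hA10, hA11, hB00, hB01, hB10, hB11]
  apply Complex.ext <;>
    simp only [Complex.add_re, Complex.add_im, Complex.sub_re, Complex.sub_im, Complex.mul_re,
      Complex.mul_im, Complex.neg_re, Complex.neg_im, Complex.I_re, Complex.I_im,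
      Complex.ofReal_re, Complex.ofReal_im, Complex.re_ofNat, Complex.im_ofNat, Complex.one_re,
      Complex.one_im] <;> ring

private lemma detQ_eq (A B : Mat2) (a p1 p2 b q1 q2 : ℝ)
    (hA00 : A 0 0 = (a:ℂ) * Complex.I) (hA01 : A 0 1 = (p1:ℂ) + (p2:ℂ) * Complex.I)
    (hA10 : A 1 0 = (p1:ℂ) - (p2:ℂ) * Complex.I) (hA11 : A 1 1 = -((a:ℂ) * Complex.I))
    (hB00 : B 0 0 = (b:ℂ) * Complex.I) (hB01 : B 0 1 = (q1:ℂ) + (q2:ℂ) * Complex.I)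
    (hB10 : B 1 0 = (q1:ℂ) - (q2:ℂ) * Complex.I) (hB11 : B 1 1 = -((b:ℂ) * Complex.I)) :
    (2 * A 0 0) * (B 1 0) * ((B*A - A*B) 0 1)
      - (2 * A 0 0) * (B 0 1) * ((B*A - A*B) 1 0)
      - (A 1 0) * (2 * B 0 0) * ((B*A - A*B) 0 1)
      + (A 1 0) * (B 0 1) * (2 * (B*A - A*B) 0 0)
      + (A 0 1) * (2 * B 0 0) * ((B*A - A*B) 1 0)
      - (A 0 1) * (B 1 0) * (2 * (B*A - A*B) 0 0)
    = ((-8 * ((p1^2+p2^2-a^2) * (q1^2+q2^2-b^2) - (p1*q1+p2*q2-a*b)^2) : ℝ) : ℂ) := by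
  simp only [Matrix.sub_apply, Matrix.mul_apply,
    Fin.sum_univ_two, hA00, hA01, hA10, hA11, hB00, hB01, hB10, hB11]
  apply Complex.ext <;>
    simp only [Complex.add_re, Complex.add_im, Complex.sub_re, Complex.sub_im, Complex.mul_re,
      Complex.mul_im, Complex.neg_re, Complex.neg_im, Complex.I_re, Complex.I_im,
      Complex.ofReal_re, Complex.ofReal_im, Complex.re_ofNat, Complex.im_ofNat, Complex.one_re,
      Complex.one_im] <;> ring

private lemma cramer3 (q00 q01 q02 q10 q11 q12 q20 q21 q22 v0 v1 v2 : ℂ)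
    (hdet : q00*q11*q22 - q00*q12*q21 - q01*q10*q22 + q01*q12*q20 + q02*q10*q21 - q02*q11*q20
      ≠ 0)
    (h0 : q00*v0 + q01*v1 + q02*v2 = 0)
    (h1 : q10*v0 + q11*v1 + q12*v2 = 0)
    (h2 : q20*v0 + q21*v1 + q22*v2 = 0) : v0 = 0 ∧ v1 = 0 ∧ v2 = 0 := by
  refine ⟨?_, ?_, ?_⟩
  · refine (mul_eq_zero.1 ?_).resolve_left hdet
    linear_combination (q11*q22 - q12*q21) * h0 + (q02*q21 - q01*q22) * h1
      + (q01*q12 - q02*q11) * h2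
  · refine (mul_eq_zero.1 ?_).resolve_left hdet
    linear_combination (q12*q20 - q10*q22) * h0 + (q00*q22 - q02*q20) * h1
      + (q02*q10 - q00*q12) * h2
  · refine (mul_eq_zero.1 ?_).resolve_left hdet
    linear_combination (q10*q21 - q11*q20) * h0 + (q01*q20 - q00*q21) * h1
      + (q00*q11 - q01*q10) * h2

private lemma trace_expand (S M : Mat2) :
    (S*M).trace = S 0 0 * M 0 0 + S 0 1 * M 1 0 + S 1 0 * M 0 1 + S 1 1 * M 1 1 := by
  rw [Matrix.trace_fin_two]
  simp [Matrix.mul_apply, Fin.sum_univ_two]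
  ring

end Aux

set_option maxHeartbeats 2000000 in
theorem stmt6 (A B : Matrix (Fin 2) (Fin 2) ℂ) (hA : su11 A) (hB : su11 B)
    (hAB : LinearIndependent ℝ ![A, B])
    (hctrl : ∃ u₀ : ℝ, (2 * ((A + u₀ • B) * (A + u₀ • B)).trace).re < 0)
    (u : ℝ → ℝ) (hu : Continuous u)
    (X : ℝ → Matrix (Fin 2) (Fin 2) ℂ)
    (hinv : ∀ t, IsUnit (X t))
    (hX : ∀ t i j, HasDerivAt (fun s => X s i j) (((A + (u t : ℂ) • B) * X t) i j) t)
    (T : Matrix (Fin 2) (Fin 2) ℂ) (hT : su11 T) (hT0 : T ≠ 0)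
    (habn : ∀ t, (T * (X t)⁻¹ * B * X t).trace = 0) :
    (B * B).trace ≠ 0 ∧ ∀ t, (u t : ℂ) * (B * B).trace = -(A * B).trace := by
  obtain ⟨a, p1, p2, hA00, hA01, hA10, hA11⟩ := su11_coords A hA
  obtain ⟨b, q1, q2, hB00, hB01, hB10, hB11⟩ := su11_coords B hB
  have hA11' : A 1 1 = -A 0 0 := by rw [hA00, hA11]
  have hB11' : B 1 1 = -B 0 0 := by rw [hB00, hB11]
  -- real linear independence of the coordinate vectors
  have hpair := LinearIndependent.pair_iff.1 hAB
  have hind : ∀ x y : ℝ, x*a + y*b = 0 → x*p1 + y*q1 = 0 → x*p2 + y*q2 = 0 →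
      x = 0 ∧ y = 0 := by
    intro x y h1 h2 h3
    apply hpair
    ext i j
    fin_cases i <;> fin_cases j <;>
      simp only [Fin.mk_zero, Fin.mk_one, Matrix.add_apply, Matrix.smul_apply, Matrix.zero_apply,
        hA00, hA01, hA10, hA11, hB00, hB01, hB10, hB11, Complex.real_smul] <;>
      (apply Complex.ext <;>
        simp only [Complex.add_re, Complex.add_im, Complex.sub_re, Complex.sub_im, Complex.mul_re,
          Complex.mul_im, Complex.neg_re, Complex.neg_im, Complex.I_re, Complex.I_im,
          Complex.ofReal_re, Complex.ofReal_im, Complex.zero_re, Complex.zero_im] <;>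
        nlinarith [h1, h2, h3])
  -- controllability in coordinates
  obtain ⟨u₀, hc0⟩ := hctrl
  have hAu00 : (A + u₀ • B) 0 0 = ((a + u₀*b : ℝ):ℂ) * Complex.I := by
    simp only [Matrix.add_apply, Matrix.smul_apply, hA00, hB00, Complex.real_smul]
    push_cast; ring
  have hAu01 : (A + u₀ • B) 0 1 = ((p1 + u₀*q1 : ℝ):ℂ) + ((p2 + u₀*q2 : ℝ):ℂ) * Complex.I := by
    simp only [Matrix.add_apply, Matrix.smul_apply, hA01, hB01, Complex.real_smul]
    push_cast; ring
  have hAu10 : (A + u₀ • B) 1 0 = ((p1 + u₀*q1 : ℝ):ℂ) - ((p2 + u₀*q2 : ℝ):ℂ) * Complex.I := by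
    simp only [Matrix.add_apply, Matrix.smul_apply, hA10, hB10, Complex.real_smul]
    push_cast; ring
  have hAu11 : (A + u₀ • B) 1 1 = -(((a + u₀*b : ℝ):ℂ) * Complex.I) := by
    simp only [Matrix.add_apply, Matrix.smul_apply, hA11, hB11, Complex.real_smul]
    push_cast; ring
  have htrAu := tr_mul_eq (A + u₀ • B) (A + u₀ • B) (a + u₀*b) (p1 + u₀*q1) (p2 + u₀*q2)
    (a + u₀*b) (p1 + u₀*q1) (p2 + u₀*q2) hAu00 hAu01 hAu10 hAu11 hAu00 hAu01 hAu10 hAu11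
  rw [htrAu] at hc0
  have hc : (p1+u₀*q1)^2 + (p2+u₀*q2)^2 < (a+u₀*b)^2 := by
    simp only [Complex.mul_re, Complex.re_ofNat, Complex.im_ofNat, Complex.ofReal_re,
      Complex.ofReal_im] at hc0
    nlinarith [hc0]
  have hgram := gram_neg a b p1 p2 q1 q2 u₀ hc hind
  -- traces in coordinates
  have htrAB := tr_mul_eq A B a p1 p2 b q1 q2 hA00 hA01 hA10 hA11 hB00 hB01 hB10 hB11
  have htrB2 := tr_mul_eq B B b q1 q2 b q1 q2 hB00 hB01 hB10 hB11 hB00 hB01 hB10 hB11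
  -- basic facts about X
  have hdet : ∀ t, (X t).det ≠ 0 := fun t =>
    ((Matrix.isUnit_iff_isUnit_det (X t)).1 (hinv t)).ne_zero
  have hTtr : T.trace = 0 := hT.1
  -- adjugate of the driving matrix
  have hD11 : ∀ t, (A + (u t : ℂ) • B) 1 1 = -((A + (u t : ℂ) • B) 0 0) := by
    intro t
    simp only [Matrix.add_apply, Matrix.smul_apply, hA11', hB11', smul_eq_mul]
    ring
  have hadjD : ∀ t, (A + (u t : ℂ) • B).adjugate = -(A + (u t : ℂ) • B) :=
    fun t => adj_eq_neg _ (hD11 t)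
  -- ψ B ≡ 0
  have hψB : ∀ t, (T * (X t).adjugate * B * X t).trace = 0 := by
    intro t
    have h := habn t
    rw [Matrix.inv_def, mul_smul_comm, smul_mul_assoc, smul_mul_assoc,
      Matrix.trace_smul] at h
    rw [Ring.inverse_eq_inv, smul_eq_mul] at h
    rcases mul_eq_zero.1 h with h' | h'
    · exact absurd h' (inv_ne_zero (hdet t))
    · exact h'
  -- entrywise derivative of the adjugate
  have hadjX : ∀ (t : ℝ) (i j : Fin 2), HasDerivAt (fun s => (X s).adjugate i j)
      (((A + (u t : ℂ) • B) * X t).adjugate i j) t := by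
    intro t i j
    simp only [Matrix.adjugate_fin_two]
    fin_cases i <;> fin_cases j <;>
      simp only [Fin.mk_zero, Fin.mk_one, Matrix.cons_val', Matrix.cons_val_zero,
        Matrix.cons_val_one, Matrix.head_cons, Matrix.empty_val', Matrix.cons_val_fin_one,
        Matrix.head_fin_const, Matrix.of_apply]
    exacts [hX t 1 1, (hX t 0 1).neg, (hX t 1 0).neg, hX t 0 0]
  -- master derivative formula
  have hder : ∀ (M : Mat2) (t : ℝ),
      HasDerivAt (fun s => (T * (X s).adjugate * M * X s).trace)
        ((T * ((A + (u t : ℂ) • B) * X t).adjugate * M * X t).trace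
          + (T * (X t).adjugate * M * ((A + (u t : ℂ) • B) * X t)).trace) t := by
    intro M t
    exact tr4_deriv T M (fun s => (X s).adjugate) X _ _ t (hadjX t) (hX t)
  -- ψ (BA - AB) ≡ 0
  have hψC : ∀ t, (T * (X t).adjugate * (B*A - A*B) * X t).trace = 0 := by
    intro t
    have h1 := hder B t
    rw [funext hψB] at h1
    have h2 := (hasDerivAt_const t (0:ℂ)).unique h1
    rw [h2, Matrix.adjugate_mul_distrib, hadjD t]
    generalize (X t).adjugate = Z
    have hmat : T * (Z * -(A + (u t : ℂ) • B)) * B * X t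
          + T * Z * B * ((A + (u t : ℂ) • B) * X t)
        = T * Z * (B*A - A*B) * X t := by
      ext i j
      fin_cases i <;> fin_cases j <;>
        simp only [Fin.mk_zero, Fin.mk_one, Matrix.add_apply, Matrix.sub_apply, Matrix.neg_apply,
          Matrix.smul_apply, Matrix.mul_apply, Fin.sum_univ_two, smul_eq_mul] <;> ring
    rw [← Matrix.trace_add, hmat]
  -- second derivative: the key scalar relation
  have key : ∀ t, ((A*B).trace + (u t : ℂ) * (B*B).trace)
      * (T * (X t).adjugate * A * X t).trace = 0 := by
    intro t
    have h1 := hder (B*A - A*B) t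
    rw [funext hψC] at h1
    have h2 := (hasDerivAt_const t (0:ℂ)).unique h1
    rw [Matrix.adjugate_mul_distrib, hadjD t, ← Matrix.trace_add] at h2
    -- matrix-level simplification of the derivative value
    have hmat : T * ((X t).adjugate * -(A + (u t : ℂ) • B)) * (B*A - A*B) * X t
          + T * (X t).adjugate * (B*A - A*B) * ((A + (u t : ℂ) • B) * X t)
        = T * (X t).adjugate *
            (((2*(A*A).trace) • B - (2*(A*B).trace) • A)
              + (u t : ℂ) • ((2*(A*B).trace) • B - (2*(B*B).trace) • A)) * X t := by
      rw [← lie_id1 A B hA11' hB11', ← lie_id2 A B hA11' hB11']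
      generalize (X t).adjugate = Z
      ext i j
      fin_cases i <;> fin_cases j <;>
        simp only [Fin.mk_zero, Fin.mk_one, Matrix.add_apply, Matrix.sub_apply, Matrix.neg_apply,
          Matrix.smul_apply, Matrix.mul_apply, Fin.sum_univ_two, smul_eq_mul] <;> ring
    rw [hmat] at h2
    -- expand the trace linearly
    have hexp : T * (X t).adjugate *
            (((2*(A*A).trace) • B - (2*(A*B).trace) • A)
              + (u t : ℂ) • ((2*(A*B).trace) • B - (2*(B*B).trace) • A)) * X t
        = ((2*(A*A).trace) • (T * (X t).adjugate * B * X t)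
            - (2*(A*B).trace) • (T * (X t).adjugate * A * X t))
          + (u t : ℂ) • ((2*(A*B).trace) • (T * (X t).adjugate * B * X t)
            - (2*(B*B).trace) • (T * (X t).adjugate * A * X t)) := by
      simp only [Matrix.mul_add, Matrix.add_mul, Matrix.mul_sub, Matrix.sub_mul,
        mul_smul_comm, smul_mul_assoc]
    rw [hexp] at h2
    simp only [Matrix.trace_add, Matrix.trace_sub, Matrix.trace_smul, smul_eq_mul,
      hψB t] at h2
    -- h2 : 0 = ... with ψB = 0
    linear_combination (1/2 : ℂ) * h2
  -- ψ A is nowhere zero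
  have hψA : ∀ t, (T * (X t).adjugate * A * X t).trace ≠ 0 := by
    intro t hzero
    have hdetY := hdet t
    -- S = X t * T * adj (X t)
    have htr : ∀ M : Mat2, (T * (X t).adjugate * M * X t).trace
        = ((X t * T * (X t).adjugate) * M).trace := by
      intro M
      rw [Matrix.trace_mul_comm (T * (X t).adjugate * M) (X t)]
      simp only [Matrix.mul_assoc]
    have hSA : ((X t * T * (X t).adjugate) * A).trace = 0 := by rw [← htr A]; exact hzero
    have hSB : ((X t * T * (X t).adjugate) * B).trace = 0 := by rw [← htr B]; exact hψB t
    have hSC : ((X t * T * (X t).adjugate) * (B*A - A*B)).trace = 0 := by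
      rw [← htr _]; exact hψC t
    have hStr : (X t * T * (X t).adjugate).trace = 0 := by
      rw [Matrix.trace_mul_cycle, Matrix.adjugate_mul, smul_mul_assoc, one_mul,
        Matrix.trace_smul, hTtr, smul_zero]
    set S := X t * T * (X t).adjugate with hSdef
    rw [Matrix.trace_fin_two] at hStr
    have hS11 : S 1 1 = -(S 0 0) := by linear_combination hStr
    rw [trace_expand] at hSA hSB hSC
    have hC11' : (B*A - A*B) 1 1 = -((B*A - A*B) 0 0) := by
      simp only [Matrix.sub_apply, Matrix.mul_apply, Fin.sum_univ_two, hA11', hB11']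
      ring
    -- the linear system
    have hdetQ : (2 * A 0 0) * (B 1 0) * ((B*A - A*B) 0 1)
        - (2 * A 0 0) * (B 0 1) * ((B*A - A*B) 1 0)
        - (A 1 0) * (2 * B 0 0) * ((B*A - A*B) 0 1)
        + (A 1 0) * (B 0 1) * (2 * (B*A - A*B) 0 0)
        + (A 0 1) * (2 * B 0 0) * ((B*A - A*B) 1 0)
        - (A 0 1) * (B 1 0) * (2 * (B*A - A*B) 0 0) ≠ 0 := by
      rw [detQ_eq A B a p1 p2 b q1 q2 hA00 hA01 hA10 hA11 hB00 hB01 hB10 hB11]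
      rw [Complex.ofReal_ne_zero]
      have h8 : (0:ℝ) < -8 * ((p1^2+p2^2-a^2) * (q1^2+q2^2-b^2) - (p1*q1+p2*q2-a*b)^2) := by
        nlinarith [hgram]
      exact ne_of_gt h8
    rw [hS11, hA11'] at hSA
    rw [hS11, hB11'] at hSB
    rw [hS11, hC11'] at hSC
    have e0 : (2 * A 0 0) * S 0 0 + (A 1 0) * S 0 1 + (A 0 1) * S 1 0 = 0 := by
      linear_combination hSA
    have e1 : (2 * B 0 0) * S 0 0 + (B 1 0) * S 0 1 + (B 0 1) * S 1 0 = 0 := by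
      linear_combination hSB
    have e2 : (2 * (B*A - A*B) 0 0) * S 0 0 + ((B*A - A*B) 1 0) * S 0 1
        + ((B*A - A*B) 0 1) * S 1 0 = 0 := by
      linear_combination hSC
    obtain ⟨hS00, hS01, hS10⟩ := cramer3 _ _ _ _ _ _ _ _ _ _ _ _ hdetQ e0 e1 e2
    have hS0 : S = 0 := by
      ext i j
      fin_cases i <;> fin_cases j <;>
        simp only [Fin.mk_zero, Fin.mk_one, Matrix.zero_apply]
      exacts [hS00, hS01, hS10, by rw [hS11, hS00, neg_zero]]
    -- conclude T = 0, contradiction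
    have e : (X t).adjugate * S * X t = ((X t).det * (X t).det) • T := by
      rw [hSdef]
      have h1 : (X t).adjugate * (X t * T * (X t).adjugate) * X t
          = ((X t).adjugate * X t) * T * ((X t).adjugate * X t) := by
        simp only [Matrix.mul_assoc]
      rw [h1, Matrix.adjugate_mul, smul_mul_assoc, one_mul, smul_mul_assoc,
        mul_smul_comm, mul_one, smul_smul]
    have hzeroT : ((X t).det * (X t).det) • T = 0 := by
      rw [← e, hS0, Matrix.mul_zero, Matrix.zero_mul]
    exact hT0 ((smul_eq_zero.1 hzeroT).resolve_left (mul_ne_zero (hdet t) (hdet t)))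
  -- finish
  have hkey2 : ∀ t, (A*B).trace + (u t : ℂ) * (B*B).trace = 0 := by
    intro t
    exact (mul_eq_zero.1 (key t)).resolve_right (hψA t)
  have hB2ne : (B*B).trace ≠ 0 := by
    intro h0
    have h1 := hkey2 0
    rw [h0, mul_zero, add_zero] at h1
    rw [htrB2] at h0
    rw [htrAB] at h1
    rw [Complex.ofReal_eq_zero] at h0 h1
    have hbb : q1^2+q2^2-b^2 = 0 := by nlinarith [h0]
    have hab : p1*q1+p2*q2-a*b = 0 := by nlinarith [h1]
    rw [hbb, hab] at hgram
    nlinarith [hgram]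
  exact ⟨hB2ne, fun t => by linear_combination hkey2 t⟩
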